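/- Let G be a rooted graph (not a tree) and T a rooted tree that are cospectral with respect to the adjacency matrix, and such that G minus its root and T minus its root are also A-cospectral. Then for any rooted graph H, the coalescence of G with H (identifying the roots) is A-cospectral with the coalescence of T with H; in particular if H is a tree then the coalescence of T with H is a tree while the coalescence of G with H is not, giving a spectral faux tree. -/

import Mathlib

open Matrix SimpleGraph Polynomial Classical

/-- The coalescence of a rooted graph `(H, u)` with a rooted graph `(G, v)`: the two roots
`u` and `v` are identified into a single vertex. -/
def coalesce {β α : Type*} (H : SimpleGraph β) (u : β) (G : SimpleGraph α) (v : α) :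
    SimpleGraph (β ⊕ {a : α // a ≠ v}) where
  Adj x y :=
    match x, y with
    | Sum.inl a, Sum.inl b => H.Adj a b
    | Sum.inl a, Sum.inr b => a = u ∧ G.Adj v b.1
    | Sum.inr a, Sum.inl b => b = u ∧ G.Adj v a.1
    | Sum.inr a, Sum.inr b => G.Adj a.1 b.1
  symm := by
    constructor
    rintro (a | a) (b | b) h
    · exact h.symm
    · exact ⟨h.1, h.2⟩
    · exact ⟨h.1, h.2⟩
    · exact h.symm
  loopless := by
    constructor
    rintro (a | a) h
    · exact H.loopless.irrefl a h
    · exact G.loopless.irrefl a.1 h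

/-- The graph obtained by deleting a vertex. -/
def delVert {α : Type*} (G : SimpleGraph α) (v : α) : SimpleGraph {a : α // a ≠ v} :=
  G.induce {a : α | a ≠ v}

section GraphPart

variable {β α : Type*} {H : SimpleGraph β} {u : β} {G : SimpleGraph α} {v : α}

lemma reach_map {V V' : Type*} {G : SimpleGraph V} {G' : SimpleGraph V'} (f : V → V')
    (hf : ∀ a b, G.Adj a b → f a = f b ∨ G'.Adj (f a) (f b)) {x y : V}
    (h : G.Reachable x y) : G'.Reachable (f x) (f y) := by
  obtain ⟨p⟩ := h
  induction p with
  | nil => exact Reachable.refl _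
  | cons h p ih =>
    rcases hf _ _ h with h' | h'
    · exact h' ▸ ih
    · exact h'.reachable.trans ih

noncomputable def gmap (u : β) (v : α) (a : α) : β ⊕ {a : α // a ≠ v} :=
  if h : a = v then Sum.inl u else Sum.inr ⟨a, h⟩

lemma gmap_inj : Function.Injective (gmap (β := β) (α := α) u v) := by
  intro a b hab
  unfold gmap at hab
  split_ifs at hab with h1 h2 h2
  · exact h1.trans h2.symm
  all_goals simpa using hab

lemma gmap_adj {a b : α} (h : G.Adj a b) :
    (coalesce H u G v).Adj (gmap u v a) (gmap u v b) := by
  unfold gmap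
  split_ifs with h1 h2 h2
  · exact absurd (by rwa [h1, h2] at h) G.irrefl
  · exact ⟨rfl, by rwa [h1] at h⟩
  · exact ⟨rfl, by subst h2; exact h.symm⟩
  · exact h

lemma pi_adj : ∀ x y, (coalesce H u G v).Adj x y →
    (Sum.elim (fun _ => v) Subtype.val : β ⊕ {a : α // a ≠ v} → α) x =
      Sum.elim (fun _ => v) Subtype.val y ∨
    G.Adj (Sum.elim (fun _ => v) Subtype.val x) (Sum.elim (fun _ => v) Subtype.val y) := by
  rintro (a | a) (b | b) h
  · exact Or.inl rfl
  · exact Or.inr h.2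
  · exact Or.inr h.2.symm
  · exact Or.inr h

lemma isTree_of_coalesce (h : (coalesce H u G v).IsTree) : G.IsTree := by
  have ea : ∀ c : α, Sum.elim (fun _ => v) Subtype.val (gmap (β := β) u v c) = c := by
    intro c; unfold gmap; split_ifs with hc
    · exact hc.symm
    · rfl
  constructor
  · haveI : Nonempty α := ⟨v⟩
    refine ⟨fun a b => ?_⟩
    have := reach_map (G' := G) _ pi_adj (h.isConnected.preconnected (gmap u v a) (gmap u v b))
    rwa [ea, ea] at this
  · rw [isAcyclic_iff_forall_adj_isBridge]
    intro a b hab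
    rw [isBridge_iff, deleteEdges]
    intro hr
    have hcoalb := isAcyclic_iff_forall_adj_isBridge.mp h.IsAcyclic (gmap_adj hab)
    rw [isBridge_iff, deleteEdges] at hcoalb
    refine hcoalb (reach_map (gmap u v) ?_ hr)
    intro c d hcd
    rw [sdiff_adj] at hcd
    refine Or.inr ?_
    rw [sdiff_adj, fromEdgeSet_adj]
    refine ⟨gmap_adj hcd.1, fun hbad => ?_⟩
    rw [Set.mem_singleton_iff, Sym2.eq_iff] at hbad
    apply hcd.2
    rw [fromEdgeSet_adj, Set.mem_singleton_iff, Sym2.eq_iff]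
    rcases hbad.1 with ⟨h1, h2⟩ | ⟨h1, h2⟩
    · exact ⟨Or.inl ⟨gmap_inj h1, gmap_inj h2⟩, hcd.1.ne⟩
    · exact ⟨Or.inr ⟨gmap_inj h1, gmap_inj h2⟩, hcd.1.ne⟩

lemma coalesce_connected (hH : H.Connected) (hG : G.Connected) :
    (coalesce H u G v).Connected := by
  have key : ∀ x : β ⊕ {a : α // a ≠ v}, (coalesce H u G v).Reachable x (Sum.inl u) := by
    rintro (b | a)
    · exact reach_map (Sum.inl : β → β ⊕ {a : α // a ≠ v})
        (fun a b h => Or.inr h) (hH.preconnected b u)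
    · have := reach_map (G' := coalesce H u G v) (gmap u v)
        (fun a b h => Or.inr (gmap_adj h)) (hG.preconnected a.1 v)
      have h1 : gmap (β := β) u v a.1 = Sum.inr a := by
        unfold gmap; rw [dif_neg a.2]
      have h2 : gmap (β := β) u v v = Sum.inl u := by unfold gmap; rw [dif_pos rfl]
      rwa [h1, h2] at this
  haveI : Nonempty (β ⊕ {a : α // a ≠ v}) := ⟨Sum.inl u⟩
  exact ⟨fun x y => (key x).trans (key y).symm⟩

lemma coalesce_isTree (hH : H.IsTree) (hG : G.IsTree) : (coalesce H u G v).IsTree := by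
  refine ⟨coalesce_connected hH.isConnected hG.isConnected, ?_⟩
  rw [isAcyclic_iff_forall_adj_isBridge]
  have hbH := isAcyclic_iff_forall_adj_isBridge.mp hH.IsAcyclic
  have hbG := isAcyclic_iff_forall_adj_isBridge.mp hG.IsAcyclic
  rintro (a | a) (b | b) hab
  · -- H edge
    rw [isBridge_iff, deleteEdges]
    intro hr
    have hb := hbH hab
    rw [isBridge_iff, deleteEdges] at hb
    refine hb (reach_map (Sum.elim id (fun _ => u)) ?_ hr)
    rintro (c | c) (d | d) hcd <;> rw [sdiff_adj] at hcd
    · refine Or.inr ?_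
      rw [sdiff_adj, fromEdgeSet_adj]
      refine ⟨hcd.1, fun hbad => ?_⟩
      rw [Set.mem_singleton_iff, Sym2.eq_iff] at hbad
      apply hcd.2
      rw [fromEdgeSet_adj, Set.mem_singleton_iff, Sym2.eq_iff]
      simp only [Sum.elim_inl, id_eq] at hbad
      rcases hbad.1 with ⟨h1, h2⟩ | ⟨h1, h2⟩
      · exact ⟨Or.inl ⟨by rw [h1], by rw [h2]⟩, by simpa using hcd.1.ne⟩
      · exact ⟨Or.inr ⟨by rw [h1], by rw [h2]⟩, by simpa using hcd.1.ne⟩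
    · exact Or.inl (by simp [hcd.1.1])
    · exact Or.inl (by simp [hcd.1.1])
    · exact Or.inl rfl
  · -- root edge: a = u, G.Adj v b.1
    obtain ⟨ha, hvb⟩ := hab
    subst ha
    rw [isBridge_iff, deleteEdges]
    intro hr
    have hb := hbG hvb
    rw [isBridge_iff, deleteEdges] at hb
    refine hb (reach_map (Sum.elim (fun _ => v) Subtype.val) ?_ hr)
    rintro (c | c) (d | d) hcd <;> rw [sdiff_adj] at hcd
    · exact Or.inl rfl
    · refine Or.inr ?_
      rw [sdiff_adj, fromEdgeSet_adj]
      refine ⟨hcd.1.2, fun hbad => ?_⟩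
      rw [Set.mem_singleton_iff, Sym2.eq_iff] at hbad
      apply hcd.2
      rw [fromEdgeSet_adj, Set.mem_singleton_iff, Sym2.eq_iff]
      simp only [Sum.elim_inl, Sum.elim_inr] at hbad
      rcases hbad.1 with ⟨h1, h2⟩ | ⟨h1, h2⟩
      · exact ⟨Or.inl ⟨by rw [hcd.1.1], by rw [Sum.inr.injEq]; exact Subtype.ext h2⟩, by simp⟩
      · exact absurd h2.symm (Ne.symm d.2)
    · refine Or.inr ?_
      rw [sdiff_adj, fromEdgeSet_adj]
      refine ⟨hcd.1.2.symm, fun hbad => ?_⟩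
      rw [Set.mem_singleton_iff, Sym2.eq_iff] at hbad
      apply hcd.2
      rw [fromEdgeSet_adj, Set.mem_singleton_iff, Sym2.eq_iff]
      simp only [Sum.elim_inl, Sum.elim_inr] at hbad
      rcases hbad.1 with ⟨h1, h2⟩ | ⟨h1, h2⟩
      · exact absurd h1.symm (Ne.symm c.2)
      · exact ⟨Or.inr ⟨by rw [Sum.inr.injEq]; exact Subtype.ext h1, by rw [hcd.1.1]⟩, by simp⟩
    · refine Or.inr ?_
      rw [sdiff_adj, fromEdgeSet_adj]
      refine ⟨hcd.1, fun hbad => ?_⟩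
      rw [Set.mem_singleton_iff, Sym2.eq_iff] at hbad
      simp only [Sum.elim_inr] at hbad
      rcases hbad.1 with ⟨h1, h2⟩ | ⟨h1, h2⟩
      · exact absurd h1 c.2
      · exact absurd h2 d.2
  · -- symmetric root edge
    obtain ⟨hb, hvb⟩ := hab
    rw [hb]
    have : (coalesce H u G v).IsBridge s(Sum.inl u, Sum.inr a) := by
      rw [isBridge_iff, deleteEdges]
      intro hr
      have hb := hbG hvb
      rw [isBridge_iff, deleteEdges] at hb
      refine hb (reach_map (Sum.elim (fun _ => v) Subtype.val) ?_ hr)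
      rintro (c | c) (d | d) hcd <;> rw [sdiff_adj] at hcd
      · exact Or.inl rfl
      · refine Or.inr ?_
        rw [sdiff_adj, fromEdgeSet_adj]
        refine ⟨hcd.1.2, fun hbad => ?_⟩
        rw [Set.mem_singleton_iff, Sym2.eq_iff] at hbad
        apply hcd.2
        rw [fromEdgeSet_adj, Set.mem_singleton_iff, Sym2.eq_iff]
        simp only [Sum.elim_inl, Sum.elim_inr] at hbad
        rcases hbad.1 with ⟨h1, h2⟩ | ⟨h1, h2⟩
        · exact ⟨Or.inl ⟨by rw [hcd.1.1], by rw [Sum.inr.injEq]; exact Subtype.ext h2⟩, by simp⟩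
        · exact absurd h2.symm (Ne.symm d.2)
      · refine Or.inr ?_
        rw [sdiff_adj, fromEdgeSet_adj]
        refine ⟨hcd.1.2.symm, fun hbad => ?_⟩
        rw [Set.mem_singleton_iff, Sym2.eq_iff] at hbad
        apply hcd.2
        rw [fromEdgeSet_adj, Set.mem_singleton_iff, Sym2.eq_iff]
        simp only [Sum.elim_inl, Sum.elim_inr] at hbad
        rcases hbad.1 with ⟨h1, h2⟩ | ⟨h1, h2⟩
        · exact absurd h1.symm (Ne.symm c.2)
        · exact ⟨Or.inr ⟨by rw [Sum.inr.injEq]; exact Subtype.ext h1, by rw [hcd.1.1]⟩, by simp⟩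
      · refine Or.inr ?_
        rw [sdiff_adj, fromEdgeSet_adj]
        refine ⟨hcd.1, fun hbad => ?_⟩
        rw [Set.mem_singleton_iff, Sym2.eq_iff] at hbad
        simp only [Sum.elim_inr] at hbad
        rcases hbad.1 with ⟨h1, h2⟩ | ⟨h1, h2⟩
        · exact absurd h1 c.2
        · exact absurd h2 d.2
    rwa [Sym2.eq_swap] at this
  · -- G-G edge
    rw [isBridge_iff, deleteEdges]
    intro hr
    have hb := hbG hab
    rw [isBridge_iff, deleteEdges] at hb
    refine hb (reach_map (Sum.elim (fun _ => v) Subtype.val) ?_ hr)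
    rintro (c | c) (d | d) hcd <;> rw [sdiff_adj] at hcd
    · exact Or.inl rfl
    · refine Or.inr ?_
      rw [sdiff_adj, fromEdgeSet_adj]
      refine ⟨hcd.1.2, fun hbad => ?_⟩
      rw [Set.mem_singleton_iff, Sym2.eq_iff] at hbad
      simp only [Sum.elim_inl, Sum.elim_inr] at hbad
      rcases hbad.1 with ⟨h1, h2⟩ | ⟨h1, h2⟩
      · exact absurd h1.symm a.2
      · exact absurd h1.symm b.2
    · refine Or.inr ?_
      rw [sdiff_adj, fromEdgeSet_adj]
      refine ⟨hcd.1.2.symm, fun hbad => ?_⟩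
      rw [Set.mem_singleton_iff, Sym2.eq_iff] at hbad
      simp only [Sum.elim_inl, Sum.elim_inr] at hbad
      rcases hbad.1 with ⟨h1, h2⟩ | ⟨h1, h2⟩
      · exact absurd h2.symm b.2
      · exact absurd h2.symm a.2
    · refine Or.inr ?_
      rw [sdiff_adj, fromEdgeSet_adj]
      refine ⟨hcd.1, fun hbad => ?_⟩
      rw [Set.mem_singleton_iff, Sym2.eq_iff] at hbad
      apply hcd.2
      rw [fromEdgeSet_adj, Set.mem_singleton_iff, Sym2.eq_iff]
      simp only [Sum.elim_inr] at hbad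
      rcases hbad.1 with ⟨h1, h2⟩ | ⟨h1, h2⟩
      · exact ⟨Or.inl ⟨by rw [Sum.inr.injEq]; exact Subtype.ext h1,
          by rw [Sum.inr.injEq]; exact Subtype.ext h2⟩, by simpa [Sum.inr.injEq, Subtype.ext_iff] using hcd.1.ne⟩
      · exact ⟨Or.inr ⟨by rw [Sum.inr.injEq]; exact Subtype.ext h1,
          by rw [Sum.inr.injEq]; exact Subtype.ext h2⟩, by simpa [Sum.inr.injEq, Subtype.ext_iff] using hcd.1.ne⟩

end GraphPart

section MatrixPart

variable {K : Type*} [Field K]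

/-- sandwich lemma -/
lemma vecMulVec_mul_vecMulVec {n m : Type*} [Fintype n] [Fintype m]
    (a : n → K) (b : m → K) (N : Matrix m m K) (c : m → K) (d : n → K) :
    vecMulVec a b * N * vecMulVec c d = (b ⬝ᵥ N *ᵥ c) • vecMulVec a d := by
  ext i j
  simp only [mul_apply, vecMulVec_apply, Matrix.smul_apply, dotProduct, mulVec, smul_eq_mul,
    Finset.sum_mul, Finset.mul_sum]
  rw [Finset.sum_comm]
  exact Finset.sum_congr rfl fun k _ => Finset.sum_congr rfl fun l _ => by ring

lemma scalar_sum_fromBlocks {n m : Type*} [Fintype n] [Fintype m] [DecidableEq n] [DecidableEq m]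
    (x : K) (A : Matrix n n K) (B : Matrix n m K) (C : Matrix m n K) (D : Matrix m m K) :
    Matrix.scalar (n ⊕ m) x - fromBlocks A B C D =
      fromBlocks (Matrix.scalar n x - A) (-B) (-C) (Matrix.scalar m x - D) := by
  ext (i | i) (j | j) <;>
    simp [Matrix.scalar_apply, Matrix.diagonal_apply, Sum.inl.injEq, Sum.inr.injEq,
      fromBlocks_apply₁₁, fromBlocks_apply₁₂, fromBlocks_apply₂₁, fromBlocks_apply₂₂]

/-- Schur-type determinant formula for our coalescence shape. -/
lemma det_coalesce_shape {n m : Type*} [Fintype n] [Fintype m] [DecidableEq n] [DecidableEq m]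
    (x : K) (A : Matrix n n K) (e : n → K) (r : m → K) (C : Matrix m m K)
    (hD : IsUnit (Matrix.scalar m x - C).det) :
    (Matrix.scalar (n ⊕ m) x - fromBlocks A (vecMulVec e r) (vecMulVec r e) C).det =
      (Matrix.scalar m x - C).det *
        (Matrix.scalar n x - A -
          (r ⬝ᵥ (Matrix.scalar m x - C)⁻¹ *ᵥ r) • vecMulVec e e).det := by
  set D := Matrix.scalar m x - C with hDdef
  haveI : Invertible D := D.invertibleOfIsUnitDet hD
  rw [scalar_sum_fromBlocks, det_fromBlocks₂₂, invOf_eq_nonsing_inv]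
  congr 1
  simp only [Matrix.neg_mul, Matrix.mul_neg, neg_neg, _root_.vecMulVec_mul_vecMulVec]
  rfl

end MatrixPart

noncomputable def fK : ℝ[X] →+* RatFunc ℝ := algebraMap ℝ[X] (RatFunc ℝ)
noncomputable def gK : ℝ →+* RatFunc ℝ := fK.comp (Polynomial.C : ℝ →+* ℝ[X])

lemma fK_inj : Function.Injective fK := IsFractionRing.injective ℝ[X] (RatFunc ℝ)

lemma fKcharpoly {n : Type*} [Fintype n] [DecidableEq n] (M : Matrix n n ℝ) :
    fK M.charpoly = (Matrix.scalar n (fK X) - M.map gK).det := by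
  rw [Matrix.charpoly, RingHom.map_det]
  congr 1
  ext i j
  simp only [charmatrix_apply, RingHom.mapMatrix_apply, Matrix.map_apply, Matrix.sub_apply,
    Matrix.scalar_apply, Matrix.diagonal_apply, map_sub]
  split_ifs <;> simp [gK, fK]


section AdjPart

variable {β α : Type*} [Fintype β] [Fintype α] (H : SimpleGraph β) (u : β) (G : SimpleGraph α) (v : α)

/-- Adjacency matrix of the coalescence in block form. -/
lemma adj_coalesce_blocks :
    (coalesce H u G v).adjMatrix ℝ =
      fromBlocks (H.adjMatrix ℝ)
        (vecMulVec (fun i => if i = u then (1:ℝ) else 0) (fun a => (G.adjMatrix ℝ) v a.1))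
        (vecMulVec (fun a => (G.adjMatrix ℝ) v a.1) (fun i => if i = u then (1:ℝ) else 0))
        ((delVert G v).adjMatrix ℝ) := by
  ext (i | i) (j | j) <;>
    simp only [adjMatrix_apply, fromBlocks_apply₁₁, fromBlocks_apply₁₂, fromBlocks_apply₂₁,
      fromBlocks_apply₂₂, vecMulVec_apply] <;>
    simp only [adjMatrix_apply, fromBlocks_apply₁₁, fromBlocks_apply₁₂, fromBlocks_apply₂₁,
      fromBlocks_apply₂₂, vecMulVec_apply, coalesce, delVert, comap_adj, Function.Embedding.coe_subtype,
      Subgraph.coe_adj] <;>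
    split_ifs <;> simp_all [SimpleGraph.induce] <;> grind

end AdjPart

section ReindexPart

variable {α : Type*} [Fintype α]

noncomputable def rootEquiv (v : α) : ({a : α // a = v} ⊕ {a : α // a ≠ v}) ≃ α where
  toFun := Sum.elim Subtype.val Subtype.val
  invFun a := if h : a = v then Sum.inl ⟨a, h⟩ else Sum.inr ⟨a, h⟩
  left_inv := by
    rintro (a | a)
    · simp only [Sum.elim_inl, a.2, dif_pos]
      exact congrArg Sum.inl (Subtype.ext a.2.symm)
    · simp [a.2]
  right_inv a := by by_cases h : a = v <;> simp [h]

instance uniqueRoot (v : α) : Unique {a : α // a = v} :=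
  ⟨⟨⟨v, rfl⟩⟩, fun x => Subtype.ext x.2⟩

lemma adj_reindex_blocks (G : SimpleGraph α) (v : α) :
    (Matrix.reindex (rootEquiv v).symm (rootEquiv v).symm) (G.adjMatrix ℝ) =
      fromBlocks 0
        (vecMulVec (fun _ => (1:ℝ)) (fun a => (G.adjMatrix ℝ) v a.1))
        (vecMulVec (fun a => (G.adjMatrix ℝ) v a.1) (fun _ => (1:ℝ)))
        ((delVert G v).adjMatrix ℝ) := by
  ext (i | i) (j | j) <;>
    simp only [reindex_apply, Equiv.symm_symm, submatrix_apply, rootEquiv, Equiv.coe_fn_mk,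
      Sum.elim_inl, Sum.elim_inr, fromBlocks_apply₁₁, fromBlocks_apply₁₂, fromBlocks_apply₂₁,
      fromBlocks_apply₂₂, vecMulVec_apply, adjMatrix_apply, delVert, Matrix.zero_apply]
  · rw [i.2, j.2]; simp
  · rw [i.2]; simp
  · rw [j.2, mul_one]; simp [adj_comm]
  · exact rfl

lemma map_vecMulVec {n m R S : Type*} [NonAssocSemiring R] [NonAssocSemiring S] (g : R →+* S)
    (a : n → R) (b : m → R) :
    (vecMulVec a b).map g = vecMulVec (g ∘ a) (g ∘ b) := by
  ext i j
  simp [vecMulVec_apply]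

end ReindexPart

section Final

variable {α : Type*} [Fintype α]

noncomputable def DK (G : SimpleGraph α) (v : α) :
    Matrix {a : α // a ≠ v} {a : α // a ≠ v} (RatFunc ℝ) :=
  Matrix.scalar _ (fK X) - ((delVert G v).adjMatrix ℝ).map gK

noncomputable def rK (G : SimpleGraph α) (v : α) : {a : α // a ≠ v} → RatFunc ℝ :=
  fun a => gK ((G.adjMatrix ℝ) v a.1)

noncomputable def sK (G : SimpleGraph α) (v : α) : RatFunc ℝ :=
  rK G v ⬝ᵥ (DK G v)⁻¹ *ᵥ rK G v

lemma DK_det (G : SimpleGraph α) (v : α) :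
    (DK G v).det = fK ((delVert G v).adjMatrix ℝ).charpoly := (fKcharpoly _).symm

lemma DK_det_isUnit (G : SimpleGraph α) (v : α) : IsUnit (DK G v).det := by
  rw [DK_det, isUnit_iff_ne_zero]
  intro h
  exact ((delVert G v).adjMatrix ℝ).charpoly_monic.ne_zero
    (fK_inj (h.trans (map_zero fK).symm))

lemma gK_one_comp : (⇑gK ∘ fun _ : PUnit => (1:ℝ)) = fun _ => (1 : RatFunc ℝ) := by
  funext _; simp

lemma fK_charpoly_root (G : SimpleGraph α) (v : α) :
    fK ((G.adjMatrix ℝ).charpoly) = (DK G v).det * (fK X - sK G v) := by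
  rw [← Matrix.charpoly_reindex ((rootEquiv v).symm) (G.adjMatrix ℝ),
    adj_reindex_blocks, fKcharpoly]
  rw [Matrix.fromBlocks_map, map_vecMulVec, map_vecMulVec, Matrix.map_zero _ (map_zero gK)]
  have h1 : (⇑gK ∘ fun _ : {a : α // a = v} => (1:ℝ)) = fun _ => (1 : RatFunc ℝ) := by
    funext _; simp
  have h2 : (⇑gK ∘ fun a : {a : α // a ≠ v} => (G.adjMatrix ℝ) v a.1) = rK G v := by
    funext _; rfl
  rw [h1, h2, det_coalesce_shape _ _ _ _ _ (DK_det_isUnit G v)]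
  have hs : (rK G v ⬝ᵥ (Matrix.scalar {a : α // a ≠ v} (fK X) -
      ((delVert G v).adjMatrix ℝ).map gK)⁻¹ *ᵥ rK G v) = sK G v := rfl
  rw [hs]
  congr 1
  rw [Matrix.det_unique]
  simp only [Matrix.sub_apply, Matrix.scalar_apply, Matrix.diagonal_apply, if_pos rfl,
    Matrix.zero_apply, Matrix.smul_apply, vecMulVec_apply, mul_one, one_mul, smul_eq_mul,
    sub_zero, if_true]

set_option synthInstance.maxHeartbeats 1000000 in
lemma fK_charpoly_coalesce {β : Type*} [Fintype β] (H : SimpleGraph β) (u : β)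
    (G : SimpleGraph α) (v : α) :
    fK (((coalesce H u G v).adjMatrix ℝ).charpoly) =
      (DK G v).det *
        (Matrix.scalar β (fK X) - (H.adjMatrix ℝ).map gK -
          sK G v • vecMulVec (fun i => if i = u then (1:RatFunc ℝ) else 0)
            (fun i => if i = u then (1:RatFunc ℝ) else 0)).det := by
  rw [fKcharpoly, adj_coalesce_blocks]
  rw [Matrix.fromBlocks_map, map_vecMulVec, map_vecMulVec]
  have h1 : (⇑gK ∘ fun i : β => if i = u then (1:ℝ) else 0) =
      fun i => if i = u then (1 : RatFunc ℝ) else 0 := by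
    funext i; by_cases h : i = u <;> simp [h]
  have h2 : (⇑gK ∘ fun a : {a : α // a ≠ v} => (G.adjMatrix ℝ) v a.1) = rK G v := by
    funext _; rfl
  rw [h1, h2, det_coalesce_shape _ _ _ _ _ (DK_det_isUnit G v)]
  rfl

end Final

/-- If a rooted non-tree `G` and a rooted tree `T` are `A`-cospectral and remain
`A`-cospectral after deleting the roots, then for any rooted graph `H` the coalescences of
`H` with `G` and with `T` are `A`-cospectral; moreover, if `H` is a tree, then the
coalescence with `T` is a tree while the coalescence with `G` is not — a spectral faux
tree for the adjacency matrix. -/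
theorem schwenk_faux_tree
    {α₁ α₂ β : Type*} [Fintype α₁] [Fintype α₂] [Fintype β]
    (G : SimpleGraph α₁) (v : α₁) (T : SimpleGraph α₂) (w : α₂)
    (hGnt : ¬ G.IsTree) (hTt : T.IsTree)
    (hco : (G.adjMatrix ℝ).charpoly = (T.adjMatrix ℝ).charpoly)
    (hco' : ((delVert G v).adjMatrix ℝ).charpoly = ((delVert T w).adjMatrix ℝ).charpoly)
    (H : SimpleGraph β) (u : β) :
    ((coalesce H u G v).adjMatrix ℝ).charpoly =
        ((coalesce H u T w).adjMatrix ℝ).charpoly ∧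
      (H.IsTree → (coalesce H u T w).IsTree ∧ ¬ (coalesce H u G v).IsTree) := by
  constructor
  · apply fK_inj
    have hp : (DK G v).det = (DK T w).det := by rw [DK_det, DK_det, hco']
    have hs : sK G v = sK T w := by
      have h1 := fK_charpoly_root G v
      have h2 := fK_charpoly_root T w
      rw [hco, h2, ← hp] at h1
      have hne : (DK G v).det ≠ 0 := (DK_det_isUnit G v).ne_zero
      exact (sub_right_inj.mp (mul_left_cancel₀ hne h1)).symm
    rw [fK_charpoly_coalesce, fK_charpoly_coalesce, hp, hs]
  · intro hH
    exact ⟨coalesce_isTree hH hTt, fun ht => hGnt (isTree_of_coalesce ht)⟩
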